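/- Assume |S_s| ≤ B for all s and θ ∈ [−log R, log R]^N with R ≥ 1. Then the Hessian H_t(θ) = Σ_{s=1}^t h_s(θ) of the MNL negative log-likelihood satisfies H_t(θ) ⪰ (1/(R(1+B·R)²)) · diag(n_t(1),…,n_t(N)), where n_t(i) = Σ_{s=1}^t 1{i ∈ S_s}. -/

import Mathlib

/-- MNL choice probability with utilities `exp (θ i)`; `none` is the no-purchase option. -/
noncomputable def mnlProb {N : ℕ} (θ : Fin N → ℝ) (S : Finset (Fin N)) :
    Option (Fin N) → ℝ
  | none => 1 / (1 + ∑ ℓ ∈ S, Real.exp (θ ℓ))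
  | some i => Real.exp (θ i) / (1 + ∑ ℓ ∈ S, Real.exp (θ ℓ))

/-- The (i,j) second partial derivative of `f` at `θ`. -/
noncomputable def hessEntry {N : ℕ} (f : (Fin N → ℝ) → ℝ) (θ : Fin N → ℝ)
    (i j : Fin N) : ℝ :=
  fderiv ℝ (fun t => fderiv ℝ f t (Pi.single j 1)) θ (Pi.single i 1)

namespace MNLaux

variable {N : ℕ}

noncomputable def Z (S : Finset (Fin N)) (t : Fin N → ℝ) : ℝ := 1 + ∑ ℓ ∈ S, Real.exp (t ℓ)

lemma Z_pos (S : Finset (Fin N)) (t : Fin N → ℝ) : 0 < Z S t := by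
  have : 0 ≤ ∑ ℓ ∈ S, Real.exp (t ℓ) := Finset.sum_nonneg fun ℓ _ => (Real.exp_pos _).le
  unfold Z; linarith

noncomputable def L (S : Finset (Fin N)) (t : Fin N → ℝ) : (Fin N → ℝ) →L[ℝ] ℝ :=
  ∑ ℓ ∈ S, Real.exp (t ℓ) • ContinuousLinearMap.proj ℓ

lemma hasFDerivAt_Z (S : Finset (Fin N)) (t : Fin N → ℝ) :
    HasFDerivAt (Z S) (L S t) t := by
  have h : ∀ ℓ ∈ S, HasFDerivAt (fun y : Fin N → ℝ => Real.exp (y ℓ))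
      (Real.exp (t ℓ) • ContinuousLinearMap.proj ℓ) t :=
    fun ℓ _ => (hasFDerivAt_apply ℓ t).exp
  exact (HasFDerivAt.fun_sum h).const_add 1

lemma L_apply (S : Finset (Fin N)) (t : Fin N → ℝ) (j : Fin N) :
    L S t (Pi.single j 1) = if j ∈ S then Real.exp (t j) else 0 := by
  simp only [L, ContinuousLinearMap.sum_apply, ContinuousLinearMap.smul_apply,
    ContinuousLinearMap.proj_apply, Pi.single_apply, smul_eq_mul, mul_ite, mul_one, mul_zero]
  simp [Finset.sum_ite_eq']

noncomputable def p (S : Finset (Fin N)) (θ : Fin N → ℝ) (i : Fin N) : ℝ :=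
  if i ∈ S then Real.exp (θ i) / Z S θ else 0

/-- first derivative of log Z in direction single j -/
lemma fderiv_logZ (S : Finset (Fin N)) (t : Fin N → ℝ) (j : Fin N) :
    fderiv ℝ (fun y => Real.log (Z S y)) t (Pi.single j 1)
      = (if j ∈ S then Real.exp (t j) else 0) / Z S t := by
  have h : HasFDerivAt (fun y => Real.log (Z S y)) ((Z S t)⁻¹ • L S t) t :=
    (hasFDerivAt_Z S t).log (Z_pos S t).ne'
  rw [h.fderiv]
  simp [L_apply, div_eq_inv_mul]

/-- second derivative of log Z -/
lemma hess_logZ (S : Finset (Fin N)) (θ : Fin N → ℝ) (i j : Fin N) :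
    fderiv ℝ (fun t => fderiv ℝ (fun y => Real.log (Z S y)) t (Pi.single j 1)) θ
        (Pi.single i 1)
      = (if i = j then p S θ i else 0) - p S θ i * p S θ j := by
  have hfun : (fun t => fderiv ℝ (fun y => Real.log (Z S y)) t (Pi.single j 1))
      = fun t => (if j ∈ S then Real.exp (t j) else 0) / Z S t :=
    funext fun t => fderiv_logZ S t j
  rw [hfun]
  by_cases hj : j ∈ S
  · -- F t = exp (t j) * (Z t)⁻¹
    simp only [hj, if_true]
    have h1 : HasFDerivAt (fun t : Fin N → ℝ => Real.exp (t j))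
        (Real.exp (θ j) • ContinuousLinearMap.proj j) θ := (hasFDerivAt_apply j θ).exp
    have h2 : HasFDerivAt (fun t => (Z S t)⁻¹) (-((Z S θ)^2)⁻¹ • L S θ) θ :=
      (hasDerivAt_inv (Z_pos S θ).ne').comp_hasFDerivAt θ (hasFDerivAt_Z S θ)
    have h3 := h1.mul h2
    have h4 : (fun t => Real.exp (t j) / Z S t) = fun t => Real.exp (t j) * (Z S t)⁻¹ := by
      funext t; rw [div_eq_mul_inv]
    rw [h4, HasFDerivAt.fderiv (f := fun t => Real.exp (t j) * (Z S t)⁻¹) h3]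
    simp only [ContinuousLinearMap.add_apply, ContinuousLinearMap.smul_apply,
      ContinuousLinearMap.proj_apply, L_apply, Pi.single_apply, smul_eq_mul]
    have hZ := (Z_pos S θ).ne'
    by_cases hij : i = j
    · subst hij
      simp only [hj, if_true, p]
      field_simp
      ring
    · have hji : (if j = i then (1:ℝ) else 0) = 0 := if_neg (fun h => hij h.symm)
      rw [hji]
      simp only [hij, if_false, p, hj, if_true]
      by_cases hi : i ∈ S
      · simp only [hi, if_true]
        field_simp
        ring
      · simp [hi]
  · -- F = 0
    simp only [hj, if_false]
    have : (fun _ : Fin N → ℝ => (0:ℝ) / Z S _) = fun t => (0:ℝ) / Z S t := rfl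
    have hz : (fun t : Fin N → ℝ => (0:ℝ) / Z S t) = fun _ => (0:ℝ) := by
      funext t; simp
    rw [hz, fderiv_fun_const]
    have hpj : p S θ j = 0 := by simp [p, hj]
    simp only [Pi.zero_apply, ContinuousLinearMap.zero_apply, hpj, mul_zero, sub_zero]
    by_cases hij : i = j
    · subst hij; simp [p, hj]
    · simp [hij]

/-- Hessian entry of negative log-likelihood. -/
lemma hess_formula (S : Finset (Fin N)) (o : Option (Fin N)) (θ : Fin N → ℝ) (i j : Fin N) :
    hessEntry (fun θ' => -Real.log (mnlProb θ' S o)) θ i j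
      = (if i = j then p S θ i else 0) - p S θ i * p S θ j := by
  unfold hessEntry
  cases o with
  | none =>
    have he : (fun θ' => -Real.log (mnlProb θ' S none)) = fun y => Real.log (Z S y) := by
      funext y
      have := (Z_pos S y).ne'
      simp [mnlProb, Z, one_div, Real.log_inv]
    rw [he, hess_logZ]
  | some i₀ =>
    have he : (fun θ' => -Real.log (mnlProb θ' S (some i₀)))
        = fun y => Real.log (Z S y) - y i₀ := by
      funext y
      have hz := (Z_pos S y).ne'
      simp only [mnlProb]
      rw [Real.log_div (Real.exp_ne_zero _) (by exact hz), Real.log_exp]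
      show -(y i₀ - Real.log (Z S y)) = _
      ring
    rw [he]
    have hin : (fun t => fderiv ℝ (fun y => Real.log (Z S y) - y i₀) t (Pi.single j 1))
        = fun t => fderiv ℝ (fun y => Real.log (Z S y)) t (Pi.single j 1)
            - (Pi.single j 1 : Fin N → ℝ) i₀ := by
      funext t
      have h1 : HasFDerivAt (fun y => Real.log (Z S y)) ((Z S t)⁻¹ • L S t) t :=
        (hasFDerivAt_Z S t).log (Z_pos S t).ne'
      have h2 := h1.sub (hasFDerivAt_apply i₀ t)
      rw [HasFDerivAt.fderiv (f := fun y => Real.log (Z S y) - y i₀) h2, h1.fderiv]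
      simp
    rw [hin]
    rw [fderiv_sub_const]
    exact hess_logZ S θ i j

end MNLaux

namespace MNLaux
variable {N : ℕ}

lemma quad_identity (p q x : Fin N → ℝ) :
    ∑ i, x i * ∑ j, ((((if i = j then p i else 0) - p i * p j) - (if i = j then q i else 0)) * x j)
      = ((∑ i, p i * x i ^ 2) - (∑ i, p i * x i) ^ 2) - ∑ i, q i * x i ^ 2 := by
  have h : ∀ i : Fin N,
      x i * ∑ j, ((((if i = j then p i else 0) - p i * p j) - (if i = j then q i else 0)) * x j)
        = p i * x i ^ 2 - (p i * x i) * (∑ j, p j * x j) - q i * x i ^ 2 := by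
    intro i
    rw [Finset.mul_sum]
    have hterm : ∀ j : Fin N,
        x i * ((((if i = j then p i else 0) - p i * p j) - (if i = j then q i else 0)) * x j)
          = ((if i = j then p i * x i * x j else 0) - (p i * x i) * (p j * x j))
              - (if i = j then q i * x i * x j else 0) := by
      intro j; by_cases hij : i = j <;> simp [hij] <;> ring
    rw [Finset.sum_congr rfl (fun j _ => hterm j), Finset.sum_sub_distrib,
      Finset.sum_sub_distrib, Finset.sum_ite_eq, Finset.sum_ite_eq, ← Finset.mul_sum]
    simp only [Finset.mem_univ, if_true]
    ring
  rw [Finset.sum_congr rfl (fun i _ => h i), Finset.sum_sub_distrib, Finset.sum_sub_distrib,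
    ← Finset.sum_mul]
  ring

lemma posSemidef_sum {n : ℕ} {ι : Type*} (s : Finset ι) (f : ι → Matrix (Fin n) (Fin n) ℝ)
    (h : ∀ i ∈ s, (f i).PosSemidef) : (∑ i ∈ s, f i).PosSemidef := by
  classical
  induction s using Finset.induction_on with
  | empty => simpa using Matrix.PosSemidef.zero
  | @insert a s' hx ih =>
    rw [Finset.sum_insert hx]
    exact (h a (Finset.mem_insert_self a s')).add (ih fun i hi => h i (Finset.mem_insert_of_mem hi))

end MNLaux

namespace MNLaux
variable {N : ℕ}

lemma quad_lower (S : Finset (Fin N)) (B : ℕ) (hcard : S.card ≤ B) (R : ℝ) (hR : 1 ≤ R)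
    (θ : Fin N → ℝ) (hθ : ∀ i, θ i ∈ Set.Icc (-Real.log R) (Real.log R)) (x : Fin N → ℝ) :
    ∑ i, (if i ∈ S then 1 / (R * (1 + B * R) ^ 2) else 0) * x i ^ 2
      ≤ (∑ i, p S θ i * x i ^ 2) - (∑ i, p S θ i * x i) ^ 2 := by
  have hR0 : (0:ℝ) < R := lt_of_lt_of_le one_pos hR
  have hexp_le : ∀ ℓ, Real.exp (θ ℓ) ≤ R := by
    intro ℓ
    have := (hθ ℓ).2
    calc Real.exp (θ ℓ) ≤ Real.exp (Real.log R) := Real.exp_le_exp.2 this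
    _ = R := Real.exp_log hR0
  have hexp_ge : ∀ ℓ, R⁻¹ ≤ Real.exp (θ ℓ) := by
    intro ℓ
    have := (hθ ℓ).1
    calc R⁻¹ = Real.exp (-(Real.log R)) := by rw [Real.exp_neg, Real.exp_log hR0]
    _ ≤ Real.exp (θ ℓ) := Real.exp_le_exp.2 this
  have hZpos := Z_pos S θ
  have hZ1 : 1 ≤ Z S θ := by
    have : 0 ≤ ∑ ℓ ∈ S, Real.exp (θ ℓ) := Finset.sum_nonneg fun ℓ _ => (Real.exp_pos _).le
    unfold Z; linarith
  have hZB : Z S θ ≤ 1 + B * R := by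
    unfold Z
    have h1 : ∑ ℓ ∈ S, Real.exp (θ ℓ) ≤ ∑ _ℓ ∈ S, R := Finset.sum_le_sum fun ℓ _ => hexp_le ℓ
    have h2 : (∑ _ℓ ∈ S, R) = S.card * R := by rw [Finset.sum_const, nsmul_eq_mul]
    have h3 : (S.card : ℝ) * R ≤ B * R := by
      have : (S.card : ℝ) ≤ B := Nat.cast_le.2 hcard
      nlinarith
    linarith
  have hp_nonneg : ∀ i, 0 ≤ p S θ i := by
    intro i; unfold p
    by_cases hi : i ∈ S
    · simp only [hi, if_true]; exact div_nonneg (Real.exp_pos _).le hZpos.le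
    · simp [hi]
  -- Cauchy-Schwarz
  have hCS : (∑ i, p S θ i * x i) ^ 2 ≤ (∑ i, p S θ i) * ∑ i, p S θ i * x i ^ 2 := by
    refine Finset.sum_sq_le_sum_mul_sum_of_sq_eq_mul Finset.univ
      (fun i _ => hp_nonneg i) (fun i _ => mul_nonneg (hp_nonneg i) (sq_nonneg _)) (fun i _ => by ring)
  have hPsum : ∑ i, p S θ i ≤ 1 - (Z S θ)⁻¹ := by
    have h1 : ∑ i, p S θ i = (∑ ℓ ∈ S, Real.exp (θ ℓ)) / Z S θ := by
      unfold p
      rw [Finset.sum_ite_mem, Finset.univ_inter, Finset.sum_div]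
    rw [h1]
    have : (∑ ℓ ∈ S, Real.exp (θ ℓ)) = Z S θ - 1 := by unfold Z; ring
    rw [this, sub_div, div_self hZpos.ne', one_div]
  have hpx2_nonneg : 0 ≤ ∑ i, p S θ i * x i ^ 2 := Finset.sum_nonneg fun i _ => by
    have := hp_nonneg i; positivity
  -- pointwise lower bound on p
  have hkey : ∀ i, (if i ∈ S then 1 / (R * (1 + B * R) ^ 2) else 0) * x i ^ 2
      ≤ (Z S θ)⁻¹ * (p S θ i * x i ^ 2) := by
    intro i
    by_cases hi : i ∈ S
    · simp only [hi, if_true, p]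
      have h1 : 1 / (R * (1 + B * R) ^ 2) ≤ (Z S θ)⁻¹ * (Real.exp (θ i) / Z S θ) := by
        have hRinv : R⁻¹ ≤ Real.exp (θ i) := hexp_ge i
        have step : (R * (1 + B * R) ^ 2)⁻¹ ≤ (R * (Z S θ * Z S θ))⁻¹ := by
          apply inv_anti₀ (by positivity)
          have hsq : Z S θ * Z S θ ≤ (1 + B * R) * (1 + B * R) :=
            mul_le_mul hZB hZB hZpos.le (le_trans hZpos.le hZB)
          nlinarith [hsq]
        calc 1 / (R * (1 + B * R) ^ 2) = (R * (1 + B * R) ^ 2)⁻¹ := one_div _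
          _ ≤ (R * (Z S θ * Z S θ))⁻¹ := step
          _ = R⁻¹ * ((Z S θ)⁻¹ * (Z S θ)⁻¹) := by rw [mul_inv, mul_inv]
          _ ≤ Real.exp (θ i) * ((Z S θ)⁻¹ * (Z S θ)⁻¹) := by
              apply mul_le_mul_of_nonneg_right hRinv
              positivity
          _ = (Z S θ)⁻¹ * (Real.exp (θ i) / Z S θ) := by
              rw [div_eq_mul_inv]; ring
      calc 1 / (R * (1 + B * R) ^ 2) * x i ^ 2
          ≤ ((Z S θ)⁻¹ * (Real.exp (θ i) / Z S θ)) * x i ^ 2 := by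
            apply mul_le_mul_of_nonneg_right h1 (sq_nonneg _)
        _ = (Z S θ)⁻¹ * (Real.exp (θ i) / Z S θ * x i ^ 2) := by ring
    · simp only [hi, if_false, p, zero_mul]
      positivity
  calc ∑ i, (if i ∈ S then 1 / (R * (1 + B * R) ^ 2) else 0) * x i ^ 2
      ≤ ∑ i, (Z S θ)⁻¹ * (p S θ i * x i ^ 2) := Finset.sum_le_sum fun i _ => hkey i
    _ = (Z S θ)⁻¹ * ∑ i, p S θ i * x i ^ 2 := by rw [Finset.mul_sum]
    _ ≤ (1 - ∑ i, p S θ i) * ∑ i, p S θ i * x i ^ 2 := by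
        apply mul_le_mul_of_nonneg_right _ hpx2_nonneg
        linarith
    _ = (∑ i, p S θ i * x i ^ 2) - (∑ i, p S θ i) * ∑ i, p S θ i * x i ^ 2 := by ring
    _ ≤ (∑ i, p S θ i * x i ^ 2) - (∑ i, p S θ i * x i) ^ 2 := by linarith

end MNLaux

namespace MNLaux
variable {N : ℕ}

lemma E_posSemidef (S : Finset (Fin N)) (B : ℕ) (hcard : S.card ≤ B) (R : ℝ) (hR : 1 ≤ R)
    (θ : Fin N → ℝ) (hθ : ∀ i, θ i ∈ Set.Icc (-Real.log R) (Real.log R)) :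
    (Matrix.of fun i j : Fin N =>
        (((if i = j then p S θ i else 0) - p S θ i * p S θ j)
          - (if i = j then (if i ∈ S then 1 / (R * (1 + B * R) ^ 2) else 0) else 0))).PosSemidef := by
  refine Matrix.PosSemidef.of_dotProduct_mulVec_nonneg ?_ ?_
  · -- Hermitian
    ext i j
    simp only [Matrix.conjTranspose_apply, Matrix.of_apply, star_trivial]
    by_cases hij : i = j
    · subst hij; ring
    · have h1 : (j = i) = False := eq_false (fun h => hij h.symm)
      have h2 : (i = j) = False := eq_false hij
      simp only [h1, h2, if_false]
      ring
  · intro x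
    have hstar : (star x : Fin N → ℝ) = x := by simp
    rw [hstar]
    show 0 ≤ ∑ i, x i * ((Matrix.of _ : Matrix (Fin N) (Fin N) ℝ).mulVec x i)
    have hmv : ∀ i, (Matrix.of (fun i j : Fin N =>
        (((if i = j then p S θ i else 0) - p S θ i * p S θ j)
          - (if i = j then (if i ∈ S then 1 / (R * (1 + B * R) ^ 2) else 0) else 0)))).mulVec x i
        = ∑ j, ((((if i = j then p S θ i else 0) - p S θ i * p S θ j)
            - (if i = j then (if i ∈ S then 1 / (R * (1 + B * R) ^ 2) else 0) else 0)) * x j) := by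
      intro i; rfl
    rw [Finset.sum_congr rfl (fun i _ => by rw [hmv i])]
    rw [quad_identity (p S θ) (fun i => if i ∈ S then 1 / (R * (1 + B * R) ^ 2) else 0) x]
    have := quad_lower S B hcard R hR θ hθ x
    linarith

end MNLaux


open MNLaux

/-- The Hessian of the MNL negative log-likelihood dominates a scaled diagonal
matrix of offer counts. -/
theorem mnl_hessian_lower_bound (N t B : ℕ)
    (S : Fin t → Finset (Fin N)) (I : Fin t → Option (Fin N))
    (hI : ∀ s, ∀ i : Fin N, I s = some i → i ∈ S s)
    (hB : ∀ s, (S s).card ≤ B)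
    (R : ℝ) (hR : 1 ≤ R) (θ : Fin N → ℝ)
    (hθ : ∀ i, θ i ∈ Set.Icc (-Real.log R) (Real.log R)) :
    ((∑ s : Fin t, Matrix.of fun i j : Fin N =>
          hessEntry (fun θ' => -Real.log (mnlProb θ' (S s) (I s))) θ i j)
      - (1 / (R * (1 + B * R) ^ 2)) •
          Matrix.diagonal (fun i : Fin N =>
            ((Finset.univ.filter (fun s : Fin t => i ∈ S s)).card : ℝ))).PosSemidef := by
  have key : ((∑ s : Fin t, Matrix.of fun i j : Fin N =>
          hessEntry (fun θ' => -Real.log (mnlProb θ' (S s) (I s))) θ i j)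
      - (1 / (R * (1 + B * R) ^ 2)) •
          Matrix.diagonal (fun i : Fin N =>
            ((Finset.univ.filter (fun s : Fin t => i ∈ S s)).card : ℝ)))
      = ∑ s : Fin t, Matrix.of fun i j : Fin N =>
          (((if i = j then p (S s) θ i else 0) - p (S s) θ i * p (S s) θ j)
            - (if i = j then (if i ∈ S s then 1 / (R * (1 + B * R) ^ 2) else 0) else 0)) := by
    ext i j
    simp only [Matrix.sub_apply, Matrix.sum_apply, Matrix.smul_apply, Matrix.diagonal_apply,
      Matrix.of_apply, smul_eq_mul]
    rw [Finset.sum_congr rfl (fun s _ => hess_formula (S s) (I s) θ i j)]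
    have hcard : ((Finset.univ.filter (fun s : Fin t => i ∈ S s)).card : ℝ)
        = ∑ s : Fin t, (if i ∈ S s then (1:ℝ) else 0) := by
      rw [Finset.card_filter]
      push_cast
      rfl
    by_cases hij : i = j
    · simp only [hij, if_true]
      rw [← hij, hcard, Finset.mul_sum, ← Finset.sum_sub_distrib]
      congr 1
      funext s
      by_cases hi : i ∈ S s <;> simp [hi]
    · simp only [hij, if_false, mul_zero, sub_zero]
  rw [key]
  exact posSemidef_sum Finset.univ _ (fun s _ => E_posSemidef (S s) B (hB s) R hR θ hθ)
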